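/- Let 0 < α < β and suppose the function x ↦ (1 − e^{−|x|^β})/(1 − e^{−|x|^α}) (extended continuously at 0) belongs to W₁(ℝ^d), i.e. equals c + ĝ for a constant c and some g ∈ L^1(ℝ^d). Then there is a constant C = C(α, β, d) such that for every f ∈ L^p(ℝ^d), 1 ≤ p ≤ ∞, and every ε > 0, ‖f − f * K^β_ε‖_p ≤ C ‖f − f * K^α_ε‖_p, where K^γ_ε is the L^1 kernel whose Fourier transform is y ↦ e^{−|εy|^γ}. -/

import Mathlib

open MeasureTheory Filter Set
open scoped ENNReal NNReal

/-- Convolution of two complex-valued functions on `ℝ^d`. -/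
noncomputable def funConv {d : ℕ} (f g : EuclideanSpace ℝ (Fin d) → ℂ)
    (x : EuclideanSpace ℝ (Fin d)) : ℂ :=
  ∫ y, f (x - y) * g y

/-- Fourier transform `ĝ(y) = ∫ g(x) e^{-i⟨x,y⟩} dx` of an integrable function. -/
noncomputable def funFT {d : ℕ} (g : EuclideanSpace ℝ (Fin d) → ℂ)
    (y : EuclideanSpace ℝ (Fin d)) : ℂ :=
  ∫ x, g x * Complex.exp (-(Complex.I * ((inner ℝ x y : ℝ) : ℂ)))

open scoped Topology

namespace GW
variable {d : ℕ}
noncomputable def eker (y x : EuclideanSpace ℝ (Fin d)) : ℂ :=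
  Complex.exp (-(Complex.I * ((inner ℝ x y : ℝ) : ℂ)))

lemma eker_cont (y : EuclideanSpace ℝ (Fin d)) : Continuous (eker y) :=
  Complex.continuous_exp.comp ((continuous_const.mul (Complex.continuous_ofReal.comp
    (continuous_id.inner continuous_const))).neg)

lemma eker_norm (y x : EuclideanSpace ℝ (Fin d)) : ‖eker y x‖ = 1 := by
  simp [eker, Complex.norm_exp]

lemma funFT_def (g : EuclideanSpace ℝ (Fin d) → ℂ) (y) : funFT g y = ∫ x, g x * eker y x := rfl

lemma ft_int {a : EuclideanSpace ℝ (Fin d) → ℂ} (ha : Integrable a volume) (y) :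
    Integrable (fun x => a x * eker y x) volume := by
  have h := ha.bdd_mul (c := 1) (eker_cont y).aestronglyMeasurable (.of_forall fun x => le_of_eq (eker_norm y x))
  simpa [mul_comm] using h

lemma funFT_sub {a b : EuclideanSpace ℝ (Fin d) → ℂ} (ha : Integrable a volume)
    (hb : Integrable b volume) (y) : funFT (fun x => a x - b x) y = funFT a y - funFT b y := by
  rw [funFT_def, funFT_def, funFT_def, ← integral_sub (ft_int ha y) (ft_int hb y)]
  congr 1; funext x; ring

lemma funFT_add {a b : EuclideanSpace ℝ (Fin d) → ℂ} (ha : Integrable a volume)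
    (hb : Integrable b volume) (y) : funFT (fun x => a x + b x) y = funFT a y + funFT b y := by
  rw [funFT_def, funFT_def, funFT_def, ← integral_add (ft_int ha y) (ft_int hb y)]
  congr 1; funext x; ring

lemma funConv_eq (f g : EuclideanSpace ℝ (Fin d) → ℂ) (x) :
    funConv f g x = convolution f g (ContinuousLinearMap.mul ℂ ℂ) volume x := by
  rw [convolution_eq_swap]; rfl

lemma funConv_integrable {a b : EuclideanSpace ℝ (Fin d) → ℂ} (ha : Integrable a volume)
    (hb : Integrable b volume) : Integrable (funConv a b) volume := by
  have h := (ha.integrable_convolution (ContinuousLinearMap.mul ℂ ℂ) hb)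
  exact h.congr (by filter_upwards with x using (funConv_eq a b x).symm)

lemma eker_split (y x t : EuclideanSpace ℝ (Fin d)) : eker y x = eker y (x - t) * eker y t := by
  unfold eker; rw [← Complex.exp_add]; congr 1
  rw [inner_sub_left]; push_cast; ring

lemma funFT_conv {a b : EuclideanSpace ℝ (Fin d) → ℂ} (ha : Integrable a volume)
    (hb : Integrable b volume) (y) : funFT (funConv a b) y = funFT a y * funFT b y := by
  have hint : Integrable (Function.uncurry fun x t : EuclideanSpace ℝ (Fin d) =>
      (a (x - t) * b t) * eker y x) ((volume : Measure (EuclideanSpace ℝ (Fin d))).prod volume) := by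
    have h0 : Integrable (fun p : EuclideanSpace ℝ (Fin d) × EuclideanSpace ℝ (Fin d) =>
        b p.2 * a (p.1 - p.2)) (Measure.prod volume volume) :=
      hb.convolution_integrand (ContinuousLinearMap.mul ℂ ℂ) ha
    have h1 := h0.bdd_mul ((eker_cont y).comp continuous_fst).aestronglyMeasurable
      (c := 1) (.of_forall fun p => le_of_eq (eker_norm y p.1))
    have heq : (Function.uncurry fun x t : EuclideanSpace ℝ (Fin d) =>
        (a (x - t) * b t) * eker y x) = fun p => eker y p.1 * (b p.2 * a (p.1 - p.2)) := by
      funext p; simp [Function.uncurry]; ring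
    rw [heq]; exact h1
  calc funFT (funConv a b) y = ∫ x, (∫ t, a (x - t) * b t) * eker y x := rfl
    _ = ∫ x, ∫ t, (a (x - t) * b t) * eker y x := by
        refine integral_congr_ae (.of_forall fun x => ?_)
        exact (integral_mul_const _ _).symm
    _ = ∫ t, ∫ x, (a (x - t) * b t) * eker y x := integral_integral_swap hint
    _ = ∫ t, ∫ x, (a (x - t) * eker y (x - t)) * (b t * eker y t) := by
        refine integral_congr_ae (.of_forall fun t => ?_)
        refine integral_congr_ae (.of_forall fun x => ?_)
        dsimp only; rw [eker_split y x t]; ring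
    _ = ∫ t, (∫ x, a (x - t) * eker y (x - t)) * (b t * eker y t) := by
        refine integral_congr_ae (.of_forall fun t => ?_)
        exact integral_mul_const _ _
    _ = ∫ t, funFT a y * (b t * eker y t) := by
        refine integral_congr_ae (.of_forall fun t => ?_)
        dsimp only
        rw [funFT_def]
        exact congrArg (· * (b t * eker y t)) (integral_sub_right_eq_self (fun u => a u * eker y u) t)
    _ = funFT a y * ∫ t, b t * eker y t := integral_const_mul _ _
    _ = funFT a y * funFT b y := rfl


variable {d : ℕ}

lemma ton {a b : EuclideanSpace ℝ (Fin d) → ℝ≥0∞} (ha : Measurable a) (hb : Measurable b) :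
    ∫⁻ x, ∫⁻ y, a (x - y) * b y = (∫⁻ x, a x) * ∫⁻ y, b y := by
  have hm : Measurable (Function.uncurry fun x y : EuclideanSpace ℝ (Fin d) => a (x - y) * b y) :=
    ((ha.comp (measurable_fst.sub measurable_snd)).mul (hb.comp measurable_snd))
  rw [lintegral_lintegral_swap hm.aemeasurable]
  calc ∫⁻ y, ∫⁻ x, a (x - y) * b y
      = ∫⁻ y, (∫⁻ x, a (x - y)) * b y := by
        refine lintegral_congr fun y => lintegral_mul_const _ (ha.comp (measurable_id.sub_const y))
    _ = ∫⁻ y, (∫⁻ x, a x) * b y := by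
        refine lintegral_congr fun y => ?_
        rw [(measurePreserving_sub_right volume y).lintegral_comp ha]
    _ = (∫⁻ x, a x) * ∫⁻ y, b y := lintegral_const_mul'' _ hb.aemeasurable

lemma young_lintegral {p : ℝ} (hp : 1 ≤ p) {a b : EuclideanSpace ℝ (Fin d) → ℝ≥0∞}
    (ha : Measurable a) (hb : Measurable b) :
    ∫⁻ x, (∫⁻ y, a (x - y) * b y) ^ p ≤ (∫⁻ y, b y) ^ p * ∫⁻ x, a x ^ p := by
  have hp0 : (0:ℝ) < p := lt_of_lt_of_le one_pos hp
  rcases eq_or_lt_of_le hp with h1 | h1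
  · simp only [← h1, ENNReal.rpow_one]
    rw [ton ha hb]; ring_nf; rfl
  · set q : ℝ := p.conjExponent with hq
    have hpq : p.HolderConjugate q := Real.HolderConjugate.conjExponent h1
    have hq0 : (0:ℝ) < q := hpq.symm.pos
    have hiq : 1/q = 1 - 1/p := by
      have := hpq.inv_add_inv_eq_one
      rw [one_div, one_div]; linarith
    have hpq1 : p / q + 1 = p := by
      rw [div_eq_mul_inv, ← one_div, hiq]
      field_simp; ring
    set B := ∫⁻ y, b y with hB
    have key : ∀ x, (∫⁻ y, a (x - y) * b y) ≤
        (∫⁻ y, a (x - y) ^ p * b y) ^ (1/p) * B ^ (1/q) := by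
      intro x
      have hsplit : ∀ y, a (x - y) * b y = ((fun y => a (x - y) * b y ^ (1/p)) *
          (fun y => b y ^ (1/q))) y := by
        intro y
        simp only [Pi.mul_apply]
        rw [mul_assoc, ← ENNReal.rpow_add_of_nonneg _ _ (by positivity) (by positivity)]
        rw [hiq]; ring_nf; rw [ENNReal.rpow_one]
      calc (∫⁻ y, a (x - y) * b y) = ∫⁻ y, ((fun y => a (x - y) * b y ^ (1/p)) *
            (fun y => b y ^ (1/q))) y := lintegral_congr hsplit
        _ ≤ (∫⁻ y, (a (x - y) * b y ^ (1/p)) ^ p) ^ (1/p) * (∫⁻ y, (b y ^ (1/q)) ^ q) ^ (1/q) :=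
            ENNReal.lintegral_mul_le_Lp_mul_Lq volume hpq
              ((ha.comp (measurable_const.sub measurable_id)).mul
                (hb.pow_const _)).aemeasurable (hb.pow_const _).aemeasurable
        _ = (∫⁻ y, a (x - y) ^ p * b y) ^ (1/p) * B ^ (1/q) := by
            congr 1
            · congr 1
              refine lintegral_congr fun y => ?_
              rw [ENNReal.mul_rpow_of_nonneg _ _ hp0.le, one_div,
                ENNReal.rpow_inv_rpow hp0.ne']
            · congr 1
              refine lintegral_congr fun y => ?_
              rw [one_div, ENNReal.rpow_inv_rpow hq0.ne']
    calc ∫⁻ x, (∫⁻ y, a (x - y) * b y) ^ p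
        ≤ ∫⁻ x, ((∫⁻ y, a (x - y) ^ p * b y) ^ (1/p) * B ^ (1/q)) ^ p :=
          lintegral_mono fun x => ENNReal.rpow_le_rpow (key x) hp0.le
      _ = ∫⁻ x, (∫⁻ y, a (x - y) ^ p * b y) * B ^ (p/q) := by
          refine lintegral_congr fun x => ?_
          rw [ENNReal.mul_rpow_of_nonneg _ _ hp0.le, one_div, ENNReal.rpow_inv_rpow hp0.ne',
            ← ENNReal.rpow_mul]
          congr 2
          field_simp
      _ = (∫⁻ x, ∫⁻ y, a (x - y) ^ p * b y) * B ^ (p/q) := by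
          refine lintegral_mul_const _ ?_
          exact Measurable.lintegral_prod_right
            (((ha.comp (measurable_fst.sub measurable_snd)).pow_const _).mul (hb.comp measurable_snd))
      _ = ((∫⁻ x, a x ^ p) * B) * B ^ (p/q) := by rw [ton (ha.pow_const _) hb]
      _ = B ^ p * ∫⁻ x, a x ^ p := by
          have hBp : B ^ (p/q) * B = B ^ p := by
            have h := ENNReal.rpow_add_of_nonneg (x := B) (p/q) 1 (by positivity) (by norm_num)
            rw [ENNReal.rpow_one] at h
            rw [← h, hpq1]
          rw [← hBp]; ring
lemma conv_nnnorm_le (f K : EuclideanSpace ℝ (Fin d) → ℂ) (x) :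
    (‖funConv f K x‖₊ : ℝ≥0∞) ≤ ∫⁻ y, (‖f (x - y)‖₊ : ℝ≥0∞) * (‖K y‖₊ : ℝ≥0∞) := by
  refine (enorm_integral_le_lintegral_enorm _).trans (le_of_eq (lintegral_congr fun y => ?_))
  simp [nnnorm_mul]; rfl

lemma lint_top_bound {f K : EuclideanSpace ℝ (Fin d) → ℂ}
    (hKm : AEMeasurable (fun y => (‖K y‖₊ : ℝ≥0∞)) volume) (x : EuclideanSpace ℝ (Fin d)) :
    ∫⁻ y, (‖f (x - y)‖₊ : ℝ≥0∞) * (‖K y‖₊ : ℝ≥0∞) ≤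
      eLpNormEssSup f volume * ∫⁻ y, (‖K y‖₊ : ℝ≥0∞) := by
  have hae : ∀ᵐ y : EuclideanSpace ℝ (Fin d), (‖f (x - y)‖₊ : ℝ≥0∞) ≤ eLpNormEssSup f volume :=
    (Measure.measurePreserving_sub_left volume x).quasiMeasurePreserving.ae
      (ae_le_eLpNormEssSup (f := f) (μ := volume))
  refine le_trans (lintegral_mono_ae (hae.mono fun y h => mul_le_mul_left h _)) ?_
  exact le_of_eq (lintegral_const_mul'' _ hKm)

lemma young_eLpNorm {p : ℝ≥0∞} (hp : 1 ≤ p) {f K : EuclideanSpace ℝ (Fin d) → ℂ}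
    (hf : StronglyMeasurable f) (hK : StronglyMeasurable K) :
    eLpNorm (funConv f K) p volume ≤ (∫⁻ y, (‖K y‖₊ : ℝ≥0∞)) * eLpNorm f p volume := by
  have hp0 : p ≠ 0 := by intro h; rw [h] at hp; exact (not_le.2 zero_lt_one) hp
  rcases eq_or_ne p ⊤ with hptop | hptop
  · subst hptop
    rw [eLpNorm_exponent_top, eLpNorm_exponent_top, eLpNormEssSup]
    refine essSup_le_of_ae_le _ (Eventually.of_forall fun x => ?_)
    exact le_trans (conv_nnnorm_le f K x)
      (le_trans (lint_top_bound hK.measurable.enorm.aemeasurable x)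
      (le_of_eq (mul_comm _ _)))
  · have hq : 1 ≤ p.toReal := by
      rw [← ENNReal.toReal_one]
      exact ENNReal.toReal_mono hptop hp
    have hq0 : (0:ℝ) < p.toReal := lt_of_lt_of_le one_pos hq
    rw [eLpNorm_eq_lintegral_rpow_enorm_toReal hp0 hptop, eLpNorm_eq_lintegral_rpow_enorm_toReal hp0 hptop]
    have step1 : ∫⁻ x, (‖funConv f K x‖₊ : ℝ≥0∞) ^ p.toReal ∂volume ≤
        (∫⁻ y, (‖K y‖₊ : ℝ≥0∞)) ^ p.toReal * ∫⁻ x, (‖f x‖₊ : ℝ≥0∞) ^ p.toReal := by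
      refine le_trans (lintegral_mono fun x => ENNReal.rpow_le_rpow (conv_nnnorm_le f K x) hq0.le) ?_
      exact young_lintegral hq hf.measurable.enorm hK.measurable.enorm
    calc (∫⁻ x, (‖funConv f K x‖₊ : ℝ≥0∞) ^ p.toReal ∂volume) ^ (1 / p.toReal)
        ≤ ((∫⁻ y, (‖K y‖₊ : ℝ≥0∞)) ^ p.toReal * ∫⁻ x, (‖f x‖₊ : ℝ≥0∞) ^ p.toReal) ^ (1 / p.toReal) :=
          ENNReal.rpow_le_rpow step1 (by positivity)
      _ = (∫⁻ y, (‖K y‖₊ : ℝ≥0∞)) * (∫⁻ x, (‖f x‖₊ : ℝ≥0∞) ^ p.toReal) ^ (1 / p.toReal) := by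
          rw [ENNReal.mul_rpow_of_nonneg _ _ (by positivity), one_div,
            ENNReal.rpow_rpow_inv hq0.ne']

lemma ae_lint_lt_top {p : ℝ≥0∞} (hp : 1 ≤ p) {f K : EuclideanSpace ℝ (Fin d) → ℂ}
    (hf : StronglyMeasurable f) (hfp : eLpNorm f p volume < ⊤) (hK : Integrable K volume)
    (hKsm : StronglyMeasurable K) :
    ∀ᵐ x : EuclideanSpace ℝ (Fin d),
      ∫⁻ y, (‖f (x - y)‖₊ : ℝ≥0∞) * (‖K y‖₊ : ℝ≥0∞) < ⊤ := by
  have hp0 : p ≠ 0 := by intro h; rw [h] at hp; exact (not_le.2 zero_lt_one) hp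
  have hKfin : (∫⁻ y, (‖K y‖₊ : ℝ≥0∞)) < ⊤ := hK.2
  rcases eq_or_ne p ⊤ with hptop | hptop
  · subst hptop
    refine Eventually.of_forall fun x => lt_of_le_of_lt (lint_top_bound hKsm.measurable.enorm.aemeasurable x) ?_
    rw [← eLpNorm_exponent_top] at *
    exact ENNReal.mul_lt_top hfp hKfin
  · have hq : 1 ≤ p.toReal := by
      rw [← ENNReal.toReal_one]; exact ENNReal.toReal_mono hptop hp
    have hq0 : (0:ℝ) < p.toReal := lt_of_lt_of_le one_pos hq
    have hfin : ∫⁻ x, (∫⁻ y, (‖f (x - y)‖₊ : ℝ≥0∞) * (‖K y‖₊ : ℝ≥0∞)) ^ p.toReal ≠ ⊤ := by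
      refine ne_of_lt (lt_of_le_of_lt (young_lintegral hq hf.measurable.enorm
        hKsm.measurable.enorm) ?_)
      exact ENNReal.mul_lt_top (ENNReal.rpow_lt_top_of_nonneg hq0.le hKfin.ne)
        (lintegral_rpow_enorm_lt_top_of_eLpNorm_lt_top hp0 hptop hfp)
    have hmeas : Measurable fun x : EuclideanSpace ℝ (Fin d) =>
        (∫⁻ y, (‖f (x - y)‖₊ : ℝ≥0∞) * (‖K y‖₊ : ℝ≥0∞)) ^ p.toReal := by
      refine Measurable.pow_const ?_ _
      exact Measurable.lintegral_prod_right
        ((hf.measurable.enorm.comp (measurable_fst.sub measurable_snd)).mul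
          (hKsm.measurable.enorm.comp measurable_snd))
    filter_upwards [ae_lt_top hmeas hfin] with x hx
    rw [← ENNReal.rpow_lt_top_iff_of_pos hq0]
    exact hx

lemma ae_integrable {p : ℝ≥0∞} (hp : 1 ≤ p) {f K : EuclideanSpace ℝ (Fin d) → ℂ}
    (hf : StronglyMeasurable f) (hfp : eLpNorm f p volume < ⊤) (hK : Integrable K volume)
    (hKsm : StronglyMeasurable K) :
    ∀ᵐ x : EuclideanSpace ℝ (Fin d), Integrable (fun y => f (x - y) * K y) volume := by
  filter_upwards [ae_lint_lt_top hp hf hfp hK hKsm] with x hx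
  refine ⟨((hf.comp_measurable (measurable_const.sub measurable_id)).mul hKsm).aestronglyMeasurable, ?_⟩
  rw [HasFiniteIntegral]
  refine lt_of_le_of_lt (le_of_eq (lintegral_congr fun y => ?_)) hx
  simp [nnnorm_mul]; rfl

lemma fourierIntegral_eq_funFT (h : EuclideanSpace ℝ (Fin d) → ℂ) (w : EuclideanSpace ℝ (Fin d)) :
    FourierTransform.fourier h w = funFT h ((2 * Real.pi) • w) := by
  rw [Real.fourier_eq, funFT]
  refine integral_congr_ae (.of_forall fun v => ?_)
  dsimp only
  rw [Circle.smul_def, Real.fourierChar_apply]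
  have harg : ((2 * Real.pi * -(inner ℝ v w : ℝ) : ℝ) : ℂ) * Complex.I =
      -(Complex.I * ((inner ℝ v ((2 * Real.pi) • w) : ℝ) : ℂ)) := by
    rw [real_inner_smul_right]
    push_cast
    ring
  rw [harg, smul_eq_mul, mul_comm]

lemma volume_zero_singleton (hd : d ≠ 0) : (volume : Measure (EuclideanSpace ℝ (Fin d))) {0} = 0 := by
  haveI : Nonempty (Fin d) := ⟨⟨0, Nat.pos_of_ne_zero hd⟩⟩
  haveI : Nontrivial (EuclideanSpace ℝ (Fin d)) := by infer_instance
  have h := Measure.addHaar_submodule (volume : Measure (EuclideanSpace ℝ (Fin d)))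
    (⊥ : Submodule ℝ (EuclideanSpace ℝ (Fin d))) bot_ne_top
  simpa using h

lemma ft_injective (hd : d ≠ 0) {h : EuclideanSpace ℝ (Fin d) → ℂ} (hh : Integrable h volume)
    (hFT : ∀ y : EuclideanSpace ℝ (Fin d), y ≠ 0 → funFT h y = 0) :
    ∀ᵐ x : EuclideanSpace ℝ (Fin d), h x = 0 := by
  refine ae_eq_zero_of_integral_contDiff_smul_eq_zero hh.locallyIntegrable ?_
  intro φ hφ hφc
  set ψ : EuclideanSpace ℝ (Fin d) → ℂ := fun x => (φ (-x) : ℂ) with hψdef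
  have hψcont : Continuous ψ := Complex.continuous_ofReal.comp (hφ.continuous.comp continuous_neg)
  have hψsupp : HasCompactSupport ψ := by
    have h1 : HasCompactSupport fun x : EuclideanSpace ℝ (Fin d) => (φ x : ℂ) :=
      hφc.comp_left (g := fun r : ℝ => (r : ℂ)) (by simp)
    exact h1.comp_homeomorph (Homeomorph.neg _)
  have hψint : Integrable ψ volume := hψcont.integrable_of_hasCompactSupport hψsupp
  set u := funConv h ψ with hu
  have huconv : u = convolution h ψ (ContinuousLinearMap.mul ℂ ℂ) volume := funext (funConv_eq h ψ)
  have hucont : Continuous u := by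
    rw [huconv]
    refine BddAbove.continuous_convolution_right_of_integrable _ ?_ hh hψcont
    obtain ⟨C, hC⟩ := hψcont.bounded_above_of_compact_support hψsupp
    exact ⟨C, fun r hr => by obtain ⟨x, rfl⟩ := hr; exact hC x⟩
  have huint : Integrable u volume := by
    rw [huconv]; exact hh.integrable_convolution _ hψint
  have huFT : ∀ᵐ w : EuclideanSpace ℝ (Fin d), FourierTransform.fourier u w = 0 := by
    have hae : ∀ᵐ w : EuclideanSpace ℝ (Fin d), w ≠ 0 := by
      rw [ae_iff]
      simpa using volume_zero_singleton hd
    filter_upwards [hae] with w hw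
    rw [fourierIntegral_eq_funFT, hu, funFT_conv hh hψint,
      hFT _ (smul_ne_zero (by positivity) hw), zero_mul]
  have hFTu_int : Integrable (FourierTransform.fourier u) volume :=
    (integrable_zero _ _ _).congr (Filter.EventuallyEq.symm huFT)
  have hzero : ∀ v, u v = 0 := by
    intro v
    have hinv := huint.fourierInv_fourier_eq hFTu_int (v := v) hucont.continuousAt
    have h0 : FourierTransformInv.fourierInv (FourierTransform.fourier u) v = 0 := by
      rw [Real.fourierInv_eq]
      rw [integral_eq_zero_of_ae]
      filter_upwards [huFT] with x hx
      simp [hx]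
    exact hinv.symm.trans h0
  have hu0 := hzero 0
  rw [hu] at hu0
  have heq : funConv h ψ 0 = ∫ x, φ x • h x := by
    unfold funConv
    rw [← (Measure.measurePreserving_neg (volume : Measure (EuclideanSpace ℝ (Fin d)))).integral_comp
      (Homeomorph.neg _).measurableEmbedding (fun z => φ z • h z)]
    refine integral_congr_ae (.of_forall fun y => ?_)
    show h (0 - y) * (φ (-y) : ℂ) = φ (-y) • h (-y)
    rw [zero_sub, Complex.real_smul]
    ring
  rw [heq] at hu0
  exact hu0

lemma funFT_tendsto_zero (g : EuclideanSpace ℝ (Fin d) → ℂ) :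
    Tendsto (funFT g) (cocompact (EuclideanSpace ℝ (Fin d))) (𝓝 0) := by
  have h2π : (2 * Real.pi)⁻¹ ≠ 0 := by positivity
  have hRL : Tendsto (FourierTransform.fourier g) (cocompact (EuclideanSpace ℝ (Fin d))) (𝓝 0) := by
    have := tendsto_integral_exp_inner_smul_cocompact (f := g)
      (V := EuclideanSpace ℝ (Fin d))
    simpa [← Real.fourier_eq] using this
  have hmap : Tendsto (fun x : EuclideanSpace ℝ (Fin d) => (2 * Real.pi)⁻¹ • x)
      (cocompact (EuclideanSpace ℝ (Fin d))) (cocompact (EuclideanSpace ℝ (Fin d))) :=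
    (Homeomorph.smulOfNeZero _ h2π).isClosedEmbedding.tendsto_cocompact
  have := hRL.comp hmap
  have heq : (FourierTransform.fourier g) ∘ (fun x : EuclideanSpace ℝ (Fin d) =>
      (2 * Real.pi)⁻¹ • x) = funFT g := by
    funext x
    rw [Function.comp_apply, fourierIntegral_eq_funFT, smul_smul]
    congr 1
    rw [mul_inv_cancel₀ (by positivity), one_smul]
  rwa [heq] at this

lemma ratio_tendsto_one {α β : ℝ} (hα : 0 < α) (hβ : 0 < β) :
    Tendsto (fun x : EuclideanSpace ℝ (Fin d) =>
      (((1 - Real.exp (-(‖x‖ ^ β))) / (1 - Real.exp (-(‖x‖ ^ α))) : ℝ) : ℂ))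
      (cocompact (EuclideanSpace ℝ (Fin d))) (𝓝 1) := by
  have key : ∀ γ : ℝ, 0 < γ → Tendsto (fun t : ℝ => 1 - Real.exp (-(t ^ γ))) atTop (𝓝 1) := by
    intro γ hγ
    have h1 : Tendsto (fun t : ℝ => Real.exp (-(t ^ γ))) atTop (𝓝 0) :=
      Real.tendsto_exp_neg_atTop_nhds_zero.comp (tendsto_rpow_atTop hγ)
    simpa using (tendsto_const_nhds (x := (1:ℝ))).sub h1
  have hr : Tendsto (fun t : ℝ => (1 - Real.exp (-(t ^ β))) / (1 - Real.exp (-(t ^ α))))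
      atTop (𝓝 1) := by
    have := (key β hβ).div (key α hα) one_ne_zero
    simpa [Pi.div_def] using this
  have hc : Tendsto (fun r : ℝ => (r : ℂ)) (𝓝 1) (𝓝 1) := by
    have := Complex.continuous_ofReal.tendsto 1
    simpa using this
  exact hc.comp (hr.comp tendsto_norm_cocompact_atTop)

lemma c_eq_one (hd : d ≠ 0) {a b : ℝ} (ha : 0 < a) (hb : 0 < b) {c : ℂ}
    {g : EuclideanSpace ℝ (Fin d) → ℂ}
    (hid : ∀ x : EuclideanSpace ℝ (Fin d), x ≠ 0 →
      (((1 - Real.exp (-(‖x‖ ^ b))) / (1 - Real.exp (-(‖x‖ ^ a))) : ℝ) : ℂ) = c + funFT g x) :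
    c = 1 := by
  haveI : Nonempty (Fin d) := ⟨⟨0, Nat.pos_of_ne_zero hd⟩⟩
  haveI : Nontrivial (EuclideanSpace ℝ (Fin d)) := by infer_instance
  have h2 : Tendsto (fun x : EuclideanSpace ℝ (Fin d) => c + funFT g x)
      (cocompact (EuclideanSpace ℝ (Fin d))) (𝓝 (c + 0)) :=
    tendsto_const_nhds.add (funFT_tendsto_zero g)
  have h1 : Tendsto (fun x : EuclideanSpace ℝ (Fin d) => c + funFT g x)
      (cocompact (EuclideanSpace ℝ (Fin d))) (𝓝 1) := by
    refine (ratio_tendsto_one ha hb).congr' ?_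
    filter_upwards [(isCompact_singleton (x := (0 : EuclideanSpace ℝ (Fin d)))).compl_mem_cocompact]
      with x hx
    exact hid x hx
  have := tendsto_nhds_unique h2 h1
  rw [add_zero] at this
  exact this

lemma gdil_ft {g : EuclideanSpace ℝ (Fin d) → ℂ} {ε : ℝ} (hε : 0 < ε)
    (y : EuclideanSpace ℝ (Fin d)) :
    funFT (fun x => ((ε ^ d)⁻¹ : ℝ) • g (ε⁻¹ • x)) y = funFT g (ε • y) := by
  have hεd : (ε : ℝ) ^ d ≠ 0 := by positivity
  unfold funFT
  have step1 : ∀ x : EuclideanSpace ℝ (Fin d),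
      (((ε ^ d)⁻¹ : ℝ) • g (ε⁻¹ • x)) * Complex.exp (-(Complex.I * ((inner ℝ x y : ℝ) : ℂ)))
      = ((ε ^ d)⁻¹ : ℝ) • (g (ε⁻¹ • x) * Complex.exp (-(Complex.I * ((inner ℝ x y : ℝ) : ℂ)))) :=
    fun x => smul_mul_assoc _ _ _
  rw [integral_congr_ae (.of_forall step1), integral_smul]
  set G : EuclideanSpace ℝ (Fin d) → ℂ :=
    fun z => g z * Complex.exp (-(Complex.I * ((inner ℝ z (ε • y) : ℝ) : ℂ))) with hG
  have hsub : ∀ x : EuclideanSpace ℝ (Fin d),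
      g (ε⁻¹ • x) * Complex.exp (-(Complex.I * ((inner ℝ x y : ℝ) : ℂ))) = G (ε⁻¹ • x) := by
    intro x
    rw [hG]
    dsimp only
    congr 3
    rw [real_inner_smul_right, real_inner_smul_left]
    rw [← mul_assoc, mul_inv_cancel₀ hε.ne', one_mul]
  have h2 : ∫ x, g (ε⁻¹ • x) * Complex.exp (-(Complex.I * ((inner ℝ x y : ℝ) : ℂ)))
      = ∫ x, G (ε⁻¹ • x) := integral_congr_ae (.of_forall hsub)
  rw [h2, Measure.integral_comp_smul volume G ε⁻¹]
  rw [finrank_euclideanSpace_fin]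
  rw [smul_smul]
  have : ((ε ^ d)⁻¹ : ℝ) * |((ε⁻¹) ^ d)⁻¹| = 1 := by
    rw [abs_of_pos (by positivity), inv_pow, inv_inv, inv_mul_cancel₀ (by positivity)]
  rw [this, one_smul]

lemma gdil_integrable {g : EuclideanSpace ℝ (Fin d) → ℂ} {ε : ℝ} (hε : 0 < ε)
    (hg : Integrable g volume) :
    Integrable (fun x => ((ε ^ d)⁻¹ : ℝ) • g (ε⁻¹ • x)) volume :=
  (hg.comp_smul (inv_ne_zero hε.ne')).smul ((ε ^ d)⁻¹ : ℝ)

lemma gdil_lintegral {g : EuclideanSpace ℝ (Fin d) → ℂ} {ε : ℝ} (hε : 0 < ε)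
    (hg : Integrable g volume) :
    ∫⁻ x, (‖((ε ^ d)⁻¹ : ℝ) • g (ε⁻¹ • x)‖₊ : ℝ≥0∞) = ∫⁻ x, (‖g x‖₊ : ℝ≥0∞) := by
  simp only [← enorm_eq_nnnorm]
  rw [← ofReal_integral_norm_eq_lintegral_enorm (gdil_integrable hε hg),
    ← ofReal_integral_norm_eq_lintegral_enorm hg]
  congr 1
  have h1 : ∀ x : EuclideanSpace ℝ (Fin d), ‖((ε ^ d)⁻¹ : ℝ) • g (ε⁻¹ • x)‖
      = ((ε ^ d)⁻¹ : ℝ) * ‖g (ε⁻¹ • x)‖ := by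
    intro x
    rw [norm_smul, Real.norm_eq_abs, abs_of_pos (by positivity)]
  rw [integral_congr_ae (.of_forall h1), integral_const_mul,
    Measure.integral_comp_smul volume (fun x => ‖g x‖) ε⁻¹, finrank_euclideanSpace_fin,
    smul_eq_mul, ← mul_assoc]
  have : ((ε ^ d)⁻¹ : ℝ) * |((ε⁻¹) ^ d)⁻¹| = 1 := by
    rw [abs_of_pos (by positivity), inv_pow, inv_inv, inv_mul_cancel₀ (by positivity)]
  rw [this, one_mul]

lemma funConv_swap (a b : EuclideanSpace ℝ (Fin d) → ℂ) (x) :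
    funConv a b x = convolution b a (ContinuousLinearMap.mul ℂ ℂ) volume x := by
  rw [convolution_def]
  unfold funConv
  refine integral_congr_ae (.of_forall fun y => ?_)
  exact mul_comm _ _

-- generalized finiteness
lemma lint_top_bound' {E F : Type*} [NormedAddCommGroup E] [NormedAddCommGroup F]
    [MeasurableSpace E] [BorelSpace E] [MeasurableSpace F] [BorelSpace F]
    {f : EuclideanSpace ℝ (Fin d) → E} {K : EuclideanSpace ℝ (Fin d) → F}
    (hKm : AEMeasurable (fun y => (‖K y‖₊ : ℝ≥0∞)) volume) (x : EuclideanSpace ℝ (Fin d)) :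
    ∫⁻ y, (‖f (x - y)‖₊ : ℝ≥0∞) * (‖K y‖₊ : ℝ≥0∞) ≤
      eLpNormEssSup f volume * ∫⁻ y, (‖K y‖₊ : ℝ≥0∞) := by
  have hae : ∀ᵐ y : EuclideanSpace ℝ (Fin d), (‖f (x - y)‖₊ : ℝ≥0∞) ≤ eLpNormEssSup f volume :=
    (Measure.measurePreserving_sub_left volume x).quasiMeasurePreserving.ae
      (ae_le_eLpNormEssSup (f := f) (μ := volume))
  refine le_trans (lintegral_mono_ae (hae.mono fun y h => mul_le_mul_left h _)) ?_
  exact le_of_eq (lintegral_const_mul'' _ hKm)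


lemma ae_lint_lt_top' {E F : Type*} [NormedAddCommGroup E] [NormedAddCommGroup F]
    [MeasurableSpace E] [BorelSpace E] [MeasurableSpace F] [BorelSpace F]
    {p : ℝ≥0∞} (hp : 1 ≤ p)
    {f : EuclideanSpace ℝ (Fin d) → E} {K : EuclideanSpace ℝ (Fin d) → F}
    (hf : StronglyMeasurable f) (hfp : eLpNorm f p volume < ⊤)
    (hKfin : (∫⁻ y, (‖K y‖₊ : ℝ≥0∞)) < ⊤) (hKsm : StronglyMeasurable K) :
    ∀ᵐ x : EuclideanSpace ℝ (Fin d),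
      ∫⁻ y, (‖f (x - y)‖₊ : ℝ≥0∞) * (‖K y‖₊ : ℝ≥0∞) < ⊤ := by
  have hp0 : p ≠ 0 := by intro h; rw [h] at hp; exact (not_le.2 zero_lt_one) hp
  rcases eq_or_ne p ⊤ with hptop | hptop
  · subst hptop
    refine Eventually.of_forall fun x =>
      lt_of_le_of_lt (lint_top_bound' hKsm.measurable.enorm.aemeasurable x) ?_
    rw [← eLpNorm_exponent_top] at *
    exact ENNReal.mul_lt_top hfp hKfin
  · have hq : 1 ≤ p.toReal := by
      rw [← ENNReal.toReal_one]; exact ENNReal.toReal_mono hptop hp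
    have hq0 : (0:ℝ) < p.toReal := lt_of_lt_of_le one_pos hq
    have hfin : ∫⁻ x, (∫⁻ y, (‖f (x - y)‖₊ : ℝ≥0∞) * (‖K y‖₊ : ℝ≥0∞)) ^ p.toReal ≠ ⊤ := by
      refine ne_of_lt (lt_of_le_of_lt (young_lintegral hq hf.measurable.enorm
        hKsm.measurable.enorm) ?_)
      exact ENNReal.mul_lt_top (ENNReal.rpow_lt_top_of_nonneg hq0.le hKfin.ne)
        (lintegral_rpow_enorm_lt_top_of_eLpNorm_lt_top hp0 hptop hfp)
    have hmeas : Measurable fun x : EuclideanSpace ℝ (Fin d) =>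
        (∫⁻ y, (‖f (x - y)‖₊ : ℝ≥0∞) * (‖K y‖₊ : ℝ≥0∞)) ^ p.toReal := by
      refine Measurable.pow_const ?_ _
      exact Measurable.lintegral_prod_right
        ((hf.measurable.enorm.comp (measurable_fst.sub measurable_snd)).mul
          (hKsm.measurable.enorm.comp measurable_snd))
    filter_upwards [ae_lt_top hmeas hfin] with x hx
    rw [← ENNReal.rpow_lt_top_iff_of_pos hq0]
    exact hx

lemma ae_integrable_norm_mul {p : ℝ≥0∞} (hp : 1 ≤ p)
    {f : EuclideanSpace ℝ (Fin d) → ℂ} {W : EuclideanSpace ℝ (Fin d) → ℝ}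
    (hf : StronglyMeasurable f) (hfp : eLpNorm f p volume < ⊤) (hW : Integrable W volume)
    (hWsm : StronglyMeasurable W) :
    ∀ᵐ x : EuclideanSpace ℝ (Fin d),
      Integrable (fun y => ‖f y‖ * W (x - y)) volume := by
  have base : ∀ᵐ x : EuclideanSpace ℝ (Fin d),
      Integrable (fun y => ‖f (x - y)‖ * W y) volume := by
    filter_upwards [ae_lint_lt_top' hp hf hfp hW.2 hWsm] with x hx
    refine ⟨(((hf.comp_measurable (measurable_const.sub measurable_id)).norm).mul
      hWsm).aestronglyMeasurable, ?_⟩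
    rw [HasFiniteIntegral]
    refine lt_of_le_of_lt (le_of_eq (lintegral_congr fun y => ?_)) hx
    simp [nnnorm_mul, nnnorm_norm]; rfl
  filter_upwards [base] with x hx
  have hemb : MeasurableEmbedding (fun t : EuclideanSpace ℝ (Fin d) => x - t) :=
    (Homeomorph.subLeft x).measurableEmbedding
  have hmp := Measure.measurePreserving_sub_left
    (volume : Measure (EuclideanSpace ℝ (Fin d))) x
  have h2 := (hmp.integrable_comp_emb hemb).mpr hx
  have heq : ((fun y => ‖f (x - y)‖ * W y) ∘ fun t : EuclideanSpace ℝ (Fin d) => x - t)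
      = fun y => ‖f y‖ * W (x - y) := by
    funext t
    simp [Function.comp, sub_sub_cancel]
  rwa [heq] at h2

lemma conv_assoc_ae {p : ℝ≥0∞} (hp : 1 ≤ p) {f K G : EuclideanSpace ℝ (Fin d) → ℂ}
    (hfSM : StronglyMeasurable f) (hfp : eLpNorm f p volume < ⊤)
    (hK : Integrable K volume) (hKSM : StronglyMeasurable K)
    (hG : Integrable G volume) (hGSM : StronglyMeasurable G) :
    ∀ᵐ x : EuclideanSpace ℝ (Fin d), funConv f (funConv G K) x = funConv (funConv f K) G x := by
  have hfg : ∀ᵐ y : EuclideanSpace ℝ (Fin d) ∂(volume : Measure (EuclideanSpace ℝ (Fin d))),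
      ConvolutionExistsAt f K y (ContinuousLinearMap.mul ℂ ℂ) volume := by
    filter_upwards [ae_integrable hp hfSM hfp hK hKSM] with y hy
    refine convolutionExistsAt_flip.mp ?_
    simpa [ConvolutionExistsAt, ContinuousLinearMap.flip_apply,
      ContinuousLinearMap.mul_apply', mul_comm] using hy
  have hgk : ∀ᵐ x : EuclideanSpace ℝ (Fin d) ∂(volume : Measure (EuclideanSpace ℝ (Fin d))),
      ConvolutionExistsAt (fun x => ‖K x‖) (fun x => ‖G x‖) x
        (ContinuousLinearMap.mul ℝ ℝ) volume :=
    hK.norm.ae_convolution_exists _ hG.norm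
  set W := convolution (fun x => ‖K x‖) (fun x => ‖G x‖) (ContinuousLinearMap.mul ℝ ℝ) volume
    with hWdef
  have hWint : Integrable W volume := hK.norm.integrable_convolution _ hG.norm
  have hfgk : ∀ᵐ x₀ : EuclideanSpace ℝ (Fin d),
      ConvolutionExistsAt (fun x => ‖f x‖) W x₀ (ContinuousLinearMap.mul ℝ ℝ) volume := by
    set W' := hWint.1.mk W with hW'def
    have hW'sm : StronglyMeasurable W' := hWint.1.stronglyMeasurable_mk
    have hW'ae : W =ᵐ[volume] W' := hWint.1.ae_eq_mk
    have hWint' : Integrable W' volume := hWint.congr hW'ae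
    filter_upwards [ae_integrable_norm_mul hp hfSM hfp hWint' hW'sm] with x₀ hx₀
    have hcongr : (fun y => ‖f y‖ * W' (x₀ - y)) =ᵐ[volume] fun y => ‖f y‖ * W (x₀ - y) := by
      have := (Measure.measurePreserving_sub_left
        (volume : Measure (EuclideanSpace ℝ (Fin d))) x₀).quasiMeasurePreserving.ae hW'ae
      filter_upwards [this] with t ht
      rw [ht]
    have : Integrable (fun y => ‖f y‖ * W (x₀ - y)) volume := (hx₀.congr hcongr)
    simpa [ConvolutionExistsAt, ContinuousLinearMap.mul_apply'] using this
  filter_upwards [hfgk] with x hx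
  have hassoc := convolution_assoc (ContinuousLinearMap.mul ℂ ℂ) (ContinuousLinearMap.mul ℂ ℂ)
    (ContinuousLinearMap.mul ℂ ℂ) (ContinuousLinearMap.mul ℂ ℂ)
    (fun a b c => mul_assoc a b c) (x₀ := x)
    hfSM.aestronglyMeasurable hKSM.aestronglyMeasurable hGSM.aestronglyMeasurable hfg hgk hx
  have h1 : funConv (funConv f K) G x
      = convolution (convolution f K (ContinuousLinearMap.mul ℂ ℂ) volume) G
        (ContinuousLinearMap.mul ℂ ℂ) volume x := by
    rw [funConv_eq]
    congr 1
    funext z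
    exact funConv_eq f K z
  have h2 : funConv f (funConv G K) x
      = convolution f (convolution K G (ContinuousLinearMap.mul ℂ ℂ) volume)
        (ContinuousLinearMap.mul ℂ ℂ) volume x := by
    rw [funConv_eq]
    congr 1
    funext z
    exact funConv_swap G K z
  rw [h1, h2, hassoc]


lemma funConv_sm {a b : EuclideanSpace ℝ (Fin d) → ℂ} (ha : StronglyMeasurable a)
    (hb : StronglyMeasurable b) : StronglyMeasurable (funConv a b) := by
  have h : StronglyMeasurable fun q : EuclideanSpace ℝ (Fin d) × EuclideanSpace ℝ (Fin d) =>
      a (q.1 - q.2) * b q.2 :=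
    (ha.comp_measurable (measurable_fst.sub measurable_snd)).mul
      (hb.comp_measurable measurable_snd)
  exact h.integral_prod_right'

lemma funConv_congr {f f' K K' : EuclideanSpace ℝ (Fin d) → ℂ} (hf : f =ᵐ[volume] f')
    (hK : K =ᵐ[volume] K') (x : EuclideanSpace ℝ (Fin d)) :
    funConv f K x = funConv f' K' x := by
  unfold funConv
  refine integral_congr_ae ?_
  have h1 := (Measure.measurePreserving_sub_left
    (volume : Measure (EuclideanSpace ℝ (Fin d))) x).quasiMeasurePreserving.ae hf
  filter_upwards [h1, hK] with y h1y h2y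
  rw [h1y, h2y]

lemma funFT_congr {K K' : EuclideanSpace ℝ (Fin d) → ℂ} (hK : K =ᵐ[volume] K')
    (y : EuclideanSpace ℝ (Fin d)) : funFT K y = funFT K' y := by
  unfold funFT
  refine integral_congr_ae ?_
  filter_upwards [hK] with x hx
  rw [hx]

end GW

/-- Comparison of Gauss–Weierstrass type means: if the ratio
`(1 - e^{-|x|^β})/(1 - e^{-|x|^α})` belongs to `W₁(ℝ^d)` (a constant plus the Fourier
transform of an `L¹` function), then there is a constant `C = C(α, β, d)` such that for
all `1 ≤ p ≤ ∞`, `f ∈ L^p` and `ε > 0`,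
`‖f - f * K^β_ε‖_p ≤ C ‖f - f * K^α_ε‖_p`, where `K^γ_ε ∈ L¹` has Fourier transform
`y ↦ e^{-(ε|y|)^γ}`. -/
theorem gauss_weierstrass_means_comparison {d : ℕ} (α β : ℝ)
    (hα : 0 < α) (hαβ : α < β)
    (hW : ∃ (c : ℂ) (g : EuclideanSpace ℝ (Fin d) → ℂ), Integrable g volume ∧
      ∀ x : EuclideanSpace ℝ (Fin d), x ≠ 0 →
        (((1 - Real.exp (-(‖x‖ ^ β))) / (1 - Real.exp (-(‖x‖ ^ α))) : ℝ) : ℂ)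
          = c + funFT g x) :
    ∃ C : ℝ≥0, ∀ (p : ℝ≥0∞), 1 ≤ p →
      ∀ f : EuclideanSpace ℝ (Fin d) → ℂ, MemLp f p volume →
      ∀ ε : ℝ, 0 < ε →
      ∀ Kα Kβ : EuclideanSpace ℝ (Fin d) → ℂ,
        Integrable Kα volume → Integrable Kβ volume →
        (∀ y, funFT Kα y = ((Real.exp (-((ε * ‖y‖) ^ α)) : ℝ) : ℂ)) →
        (∀ y, funFT Kβ y = ((Real.exp (-((ε * ‖y‖) ^ β)) : ℝ) : ℂ)) →
        eLpNorm (fun x => f x - funConv f Kβ x) p volume ≤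
          C * eLpNorm (fun x => f x - funConv f Kα x) p volume := by
  classical
  obtain ⟨c, g, hg, hid⟩ := hW
  have hβ0 : 0 < β := hα.trans hαβ
  refine ⟨1 + (∫⁻ y, (‖g y‖₊ : ℝ≥0∞) ∂volume).toNNReal, ?_⟩
  intro p hp f hf ε hε Kα Kβ hKα hKβ hFTα hFTβ
  by_cases hd : d = 0
  · -- dimension zero : both sides vanish
    subst hd
    haveI : Subsingleton (EuclideanSpace ℝ (Fin 0)) := by
      constructor
      intro x y
      ext i
      exact absurd i.2 (by simp)
    have hKβ1 : (∫ y, Kβ y) = 1 := by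
      have h0 := hFTβ 0
      have : funFT Kβ 0 = ∫ y, Kβ y := by
        unfold funFT
        refine integral_congr_ae (.of_forall fun x => ?_)
        simp
      rw [this] at h0
      rw [h0]
      norm_num
      rw [Real.zero_rpow hβ0.ne']
      simp
    have hzero : (fun x => f x - funConv f Kβ x) = fun _ => 0 := by
      funext x
      have hconv : funConv f Kβ x = f x := by
        unfold funConv
        have : ∀ y : EuclideanSpace ℝ (Fin 0), f (x - y) * Kβ y = f x * Kβ y := by
          intro y
          congr 1
          exact congrArg f (Subsingleton.elim _ _)
        rw [integral_congr_ae (.of_forall this), integral_const_mul, hKβ1, mul_one]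
      rw [hconv, sub_self]
    rw [hzero]
    have : eLpNorm (fun _ : EuclideanSpace ℝ (Fin 0) => (0:ℂ)) p volume = 0 := eLpNorm_zero
    rw [this]
    exact zero_le
  -- main case : d ≠ 0
  -- strongly measurable representatives
  set f' := hf.1.mk f with hf'def
  have hf'sm : StronglyMeasurable f' := hf.1.stronglyMeasurable_mk
  have hf'ae : f =ᵐ[volume] f' := hf.1.ae_eq_mk
  set Ka := hKα.1.mk Kα with hKadef
  have hKasm : StronglyMeasurable Ka := hKα.1.stronglyMeasurable_mk
  have hKaae : Kα =ᵐ[volume] Ka := hKα.1.ae_eq_mk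
  have hKaint : Integrable Ka volume := hKα.congr hKaae
  set Kb := hKβ.1.mk Kβ with hKbdef
  have hKbsm : StronglyMeasurable Kb := hKβ.1.stronglyMeasurable_mk
  have hKbae : Kβ =ᵐ[volume] Kb := hKβ.1.ae_eq_mk
  have hKbint : Integrable Kb volume := hKβ.congr hKbae
  set g' := hg.1.mk g with hg'def
  have hg'sm : StronglyMeasurable g' := hg.1.stronglyMeasurable_mk
  have hg'ae : g =ᵐ[volume] g' := hg.1.ae_eq_mk
  have hg'int : Integrable g' volume := hg.congr hg'ae
  have hfp' : eLpNorm f' p volume < ⊤ := by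
    rw [← eLpNorm_congr_ae hf'ae]; exact hf.2
  -- dilated g
  set gε : EuclideanSpace ℝ (Fin d) → ℂ := fun x => ((ε ^ d)⁻¹ : ℝ) • g' (ε⁻¹ • x) with hgεdef
  have hgεint : Integrable gε volume := GW.gdil_integrable hε hg'int
  have hgεsm : StronglyMeasurable gε := by
    refine StronglyMeasurable.const_smul (f := fun x => g' (ε⁻¹ • x)) ?_ ((ε ^ d)⁻¹ : ℝ)
    exact hg'sm.comp_measurable (measurable_const_smul _)
  have hgεft : ∀ y, funFT gε y = funFT g (ε • y) := by
    intro y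
    rw [GW.gdil_ft hε y]
    exact (GW.funFT_congr hg'ae (ε • y)).symm
  have hgεlint : ∫⁻ x, (‖gε x‖₊ : ℝ≥0∞) = ∫⁻ x, (‖g x‖₊ : ℝ≥0∞) := by
    rw [GW.gdil_lintegral hε hg'int]
    refine lintegral_congr_ae ?_
    filter_upwards [hg'ae] with x hx
    rw [hx]
  -- c = 1
  have hc1 : c = 1 := GW.c_eq_one hd hα hβ0 hid
  -- kernel identity
  have hker : ∀ᵐ x : EuclideanSpace ℝ (Fin d),
      Kb x = Ka x - gε x + funConv gε Ka x := by
    set h : EuclideanSpace ℝ (Fin d) → ℂ :=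
      fun x => Kb x - Ka x + gε x - funConv gε Ka x with hhdef
    have hhint : Integrable h volume :=
      ((hKbint.sub hKaint).add hgεint).sub (GW.funConv_integrable hgεint hKaint)
    have hFTh : ∀ y : EuclideanSpace ℝ (Fin d), y ≠ 0 → funFT h y = 0 := by
      intro y hy
      have e1 : funFT h y = funFT (fun x => Kb x - Ka x + gε x) y
          - funFT (funConv gε Ka) y :=
        GW.funFT_sub ((hKbint.sub hKaint).add hgεint) (GW.funConv_integrable hgεint hKaint) y
      have e2 : funFT (fun x => Kb x - Ka x + gε x) y
          = funFT (fun x => Kb x - Ka x) y + funFT gε y :=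
        GW.funFT_add (hKbint.sub hKaint) hgεint y
      have e3 : funFT (fun x => Kb x - Ka x) y = funFT Kb y - funFT Ka y :=
        GW.funFT_sub hKbint hKaint y
      have e4 : funFT (funConv gε Ka) y = funFT gε y * funFT Ka y :=
        GW.funFT_conv hgεint hKaint y
      have hKaft : funFT Ka y = ((Real.exp (-((ε * ‖y‖) ^ α)) : ℝ) : ℂ) := by
        rw [← GW.funFT_congr hKaae y]; exact hFTα y
      have hKbft : funFT Kb y = ((Real.exp (-((ε * ‖y‖) ^ β)) : ℝ) : ℂ) := by
        rw [← GW.funFT_congr hKbae y]; exact hFTβ y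
      -- the multiplier identity at ε • y
      have hεy : (ε • y : EuclideanSpace ℝ (Fin d)) ≠ 0 := smul_ne_zero hε.ne' hy
      have hnorm : ‖(ε • y : EuclideanSpace ℝ (Fin d))‖ = ε * ‖y‖ := by
        rw [norm_smul, Real.norm_eq_abs, abs_of_pos hε]
      have hden : (1 : ℝ) - Real.exp (-((ε * ‖y‖) ^ α)) ≠ 0 := by
        have h1 : 0 < ε * ‖y‖ := mul_pos hε (norm_pos_iff.mpr hy)
        have h2 : Real.exp (-((ε * ‖y‖) ^ α)) < 1 :=
          Real.exp_lt_one_iff.mpr (neg_lt_zero.mpr (Real.rpow_pos_of_pos h1 α))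
        intro hcontra
        rw [sub_eq_zero] at hcontra
        exact absurd hcontra.symm (ne_of_lt h2)
      have hWid := hid (ε • y) hεy
      rw [hc1, hnorm] at hWid
      have hmul : ((1 - Real.exp (-((ε * ‖y‖) ^ β)) : ℝ) : ℂ)
          = (1 + funFT g (ε • y)) * ((1 - Real.exp (-((ε * ‖y‖) ^ α)) : ℝ) : ℂ) := by
        rw [Complex.ofReal_div] at hWid
        rw [div_eq_iff (by exact_mod_cast hden)] at hWid
        exact hWid
      rw [e1, e2, e3, e4, hKaft, hKbft, hgεft y]
      push_cast at hmul ⊢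
      linear_combination (-1 : ℂ) * hmul
    have := GW.ft_injective hd hhint hFTh
    filter_upwards [this] with x hx
    rw [hhdef] at hx
    simp only at hx
    linear_combination hx
  -- the function u
  set w : EuclideanSpace ℝ (Fin d) → ℂ := funConv f' Ka with hwdef
  have hwsm : StronglyMeasurable w := GW.funConv_sm hf'sm hKasm
  have hwp : eLpNorm w p volume < ⊤ := by
    refine lt_of_le_of_lt (GW.young_eLpNorm hp hf'sm hKasm) ?_
    exact ENNReal.mul_lt_top hKaint.2 hfp'
  set u : EuclideanSpace ℝ (Fin d) → ℂ := fun x => f' x - w x with hudef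
  have husm : StronglyMeasurable u := hf'sm.sub hwsm
  -- the key pointwise identity a.e.
  set W : EuclideanSpace ℝ (Fin d) → ℂ := funConv gε Ka with hWdef
  have hWsm : StronglyMeasurable W := GW.funConv_sm hgεsm hKasm
  have hWint : Integrable W volume := GW.funConv_integrable hgεint hKaint
  have hkey : ∀ᵐ x : EuclideanSpace ℝ (Fin d),
      f' x - funConv f' Kb x = u x + funConv u gε x := by
    have h1 := GW.ae_integrable hp hf'sm hfp' hKaint hKasm
    have h2 := GW.ae_integrable hp hf'sm hfp' hgεint hgεsm
    have h3 := GW.ae_integrable hp hf'sm hfp' hWint hWsm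
    have h4 := GW.ae_integrable hp hwsm hwp hgεint hgεsm
    have h5 := GW.conv_assoc_ae hp hf'sm hfp' hKaint hKasm hgεint hgεsm
    filter_upwards [h1, h2, h3, h4, h5] with x hx1 hx2 hx3 hx4 hx5
    have step1 : funConv f' Kb x = funConv f' (fun z => Ka z - gε z + W z) x :=
      GW.funConv_congr (EventuallyEq.refl _ _) hker x
    have step2 : funConv f' (fun z => Ka z - gε z + W z) x
        = funConv f' Ka x - funConv f' gε x + funConv f' W x := by
      unfold funConv
      have heq : ∀ y : EuclideanSpace ℝ (Fin d),
          f' (x - y) * (Ka y - gε y + W y)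
          = (f' (x - y) * Ka y - f' (x - y) * gε y) + f' (x - y) * W y := fun y => by ring
      have hadd := integral_add (hx1.sub hx2) hx3
      have hsub := integral_sub hx1 hx2
      simp only [Pi.add_apply, Pi.sub_apply] at hadd hsub
      rw [integral_congr_ae (.of_forall heq), hadd, hsub]
    have step3 : funConv f' W x = funConv w gε x := hx5
    have step4 : funConv u gε x = funConv f' gε x - funConv w gε x := by
      unfold funConv
      have heq : ∀ y : EuclideanSpace ℝ (Fin d),
          u (x - y) * gε y = f' (x - y) * gε y - w (x - y) * gε y := fun y => by
        rw [hudef]; ring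
      have hsub := integral_sub hx2 hx4
      rw [integral_congr_ae (.of_forall heq), hsub]
    rw [step1, step2, step3, step4, hudef]
    ring
  -- assemble the estimate
  have hnormeq : eLpNorm (fun x => f x - funConv f Kβ x) p volume
      = eLpNorm (fun x => f' x - funConv f' Kb x) p volume := by
    refine eLpNorm_congr_ae ?_
    filter_upwards [hf'ae] with x hx
    rw [hx, GW.funConv_congr hf'ae hKbae x]
  have hnormeq2 : eLpNorm u p volume
      = eLpNorm (fun x => f x - funConv f Kα x) p volume := by
    refine eLpNorm_congr_ae ?_
    filter_upwards [hf'ae] with x hx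
    rw [hudef]
    simp only
    rw [hx, hwdef, GW.funConv_congr hf'ae hKaae x]
  have hCcast : ((1 + (∫⁻ y, (‖g y‖₊ : ℝ≥0∞) ∂volume).toNNReal : ℝ≥0) : ℝ≥0∞)
      = 1 + ∫⁻ y, (‖g y‖₊ : ℝ≥0∞) ∂volume := by
    push_cast
    rw [ENNReal.coe_toNNReal (a := ∫⁻ y, (‖g y‖₊ : ℝ≥0∞) ∂volume) hg.2.ne]
  calc eLpNorm (fun x => f x - funConv f Kβ x) p volume
      = eLpNorm (fun x => f' x - funConv f' Kb x) p volume := hnormeq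
    _ = eLpNorm (fun x => u x + funConv u gε x) p volume := eLpNorm_congr_ae hkey
    _ ≤ eLpNorm u p volume + eLpNorm (funConv u gε) p volume :=
        eLpNorm_add_le husm.aestronglyMeasurable
          (GW.funConv_sm husm hgεsm).aestronglyMeasurable hp
    _ ≤ eLpNorm u p volume + (∫⁻ y, (‖gε y‖₊ : ℝ≥0∞)) * eLpNorm u p volume :=
        add_le_add_right (GW.young_eLpNorm hp husm hgεsm) _
    _ = (1 + ∫⁻ y, (‖g y‖₊ : ℝ≥0∞) ∂volume) * eLpNorm u p volume := by
        rw [hgεlint]; ring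
    _ = (1 + (∫⁻ y, (‖g y‖₊ : ℝ≥0∞) ∂volume).toNNReal : ℝ≥0) *
          eLpNorm (fun x => f x - funConv f Kα x) p volume := by
        rw [hCcast, hnormeq2]
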